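/- Let H be a Horton set (in x-order) with even part H⁺ and odd part H⁻, where H⁻ is itself a Horton set with parts (H⁻)⁺ and (H⁻)⁻. If h_a <_x h_b are points of H⁻ with exactly one point of H⁻ strictly between them in x-coordinate, then for any point h_c ∈ H⁺, the triangle h_a h_b h_c contains at most 1 point of H in its interior. -/

import Mathlib

open scoped Classical

noncomputable section

/-- A planar point set is in general position if no three distinct points are collinear. -/
def GenPos (S : Set (ℝ × ℝ)) : Prop :=
  ∀ p ∈ S, ∀ q ∈ S, ∀ r ∈ S, p ≠ q → p ≠ r → q ≠ r →
    ¬ Collinear ℝ ({p, q, r} : Set (ℝ × ℝ))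

/-- Number of points of `S` strictly inside the triangle `a b c`. -/
def triPts (S : Finset (ℝ × ℝ)) (a b c : ℝ × ℝ) : ℕ :=
  (S.filter (fun p => p ∈ interior (convexHull ℝ ({a, b, c} : Set (ℝ × ℝ))))).card

/-- `S` (colored by `χ`) contains a monochromatic triangle with at most `s` interior points. -/
def MonoTriangle {c : ℕ} (S : Finset (ℝ × ℝ)) (χ : ℝ × ℝ → Fin c) (s : ℕ) : Prop :=
  ∃ a ∈ S, ∃ b ∈ S, ∃ d ∈ S, a ≠ b ∧ a ≠ d ∧ b ≠ d ∧
    χ a = χ b ∧ χ b = χ d ∧ triPts S a b d ≤ s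
/-- The elements at even positions (0-based: positions 0,2,4,…) of a list. -/
def everyOther : List (ℝ × ℝ) → List (ℝ × ℝ)
  | [] => []
  | [a] => [a]
  | a :: _ :: l => a :: everyOther l

/-- A list of points sorted by strictly increasing x-coordinate. -/
def SortedX (l : List (ℝ × ℝ)) : Prop := l.Pairwise (fun p q => p.1 < q.1)

/-- `p` lies strictly above the (non-vertical) line through `a` and `b`. -/
def AboveLine (a b p : ℝ × ℝ) : Prop :=
  a.2 + (b.2 - a.2) / (b.1 - a.1) * (p.1 - a.1) < p.2

/-- `p` lies strictly below the (non-vertical) line through `a` and `b`. -/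
def BelowLine (a b p : ℝ × ℝ) : Prop :=
  p.2 < a.2 + (b.2 - a.2) / (b.1 - a.1) * (p.1 - a.1)

/-- Horton sets, as lists sorted by x-coordinate. For a list `l`, the odd points
`H⁻` are `everyOther l` (1-indexed positions 1,3,5,…) and the even points `H⁺` are
`everyOther l.tail` (positions 2,4,6,…). Both parts are recursively Horton, every
line through two points of `H⁺` leaves all of `H⁻` strictly below it, and every
line through two points of `H⁻` leaves all of `H⁺` strictly above it. -/
inductive IsHorton : List (ℝ × ℝ) → Prop where
  | small : ∀ l : List (ℝ × ℝ), l.length ≤ 2 → SortedX l → IsHorton l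
  | step : ∀ l : List (ℝ × ℝ), SortedX l → 3 ≤ l.length →
      IsHorton (everyOther l) → IsHorton (everyOther l.tail) →
      (∀ a ∈ everyOther l.tail, ∀ b ∈ everyOther l.tail, a ≠ b →
        ∀ p ∈ everyOther l, BelowLine a b p) →
      (∀ a ∈ everyOther l, ∀ b ∈ everyOther l, a ≠ b →
        ∀ p ∈ everyOther l.tail, AboveLine a b p) →
      IsHorton l

def orient3 (u v q : ℝ × ℝ) : ℝ :=
  (v.1 - u.1) * (q.2 - u.2) - (v.2 - u.2) * (q.1 - u.1)

lemma orient3_cyc (u v q : ℝ × ℝ) : orient3 u v q = orient3 q u v := by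
  unfold orient3; ring

lemma orient3_self1 (u v : ℝ × ℝ) : orient3 u v u = 0 := by unfold orient3; ring
lemma orient3_self2 (u v : ℝ × ℝ) : orient3 u v v = 0 := by unfold orient3; ring

lemma aboveLine_iff (u v q : ℝ × ℝ) (h : u.1 < v.1) :
    AboveLine u v q ↔ 0 < orient3 u v q := by
  have hd : 0 < v.1 - u.1 := sub_pos.mpr h
  constructor
  · intro h1
    unfold AboveLine at h1
    rw [div_mul_eq_mul_div] at h1
    have h2 : (v.2 - u.2) * (q.1 - u.1) / (v.1 - u.1) < q.2 - u.2 := by linarith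
    have h3 := (div_lt_iff₀ hd).mp h2
    unfold orient3; nlinarith
  · intro h1
    unfold orient3 at h1
    unfold AboveLine
    rw [div_mul_eq_mul_div]
    have h2 : (v.2 - u.2) * (q.1 - u.1) < (q.2 - u.2) * (v.1 - u.1) := by nlinarith
    have h3 := (div_lt_iff₀ hd).mpr h2
    linarith

lemma belowLine_iff (u v q : ℝ × ℝ) (h : u.1 < v.1) :
    BelowLine u v q ↔ orient3 u v q < 0 := by
  have hd : 0 < v.1 - u.1 := sub_pos.mpr h
  constructor
  · intro h1
    unfold BelowLine at h1
    rw [div_mul_eq_mul_div] at h1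
    have h2 : q.2 - u.2 < (v.2 - u.2) * (q.1 - u.1) / (v.1 - u.1) := by linarith
    have h3 := (lt_div_iff₀ hd).mp h2
    unfold orient3; nlinarith
  · intro h1
    unfold orient3 at h1
    unfold BelowLine
    rw [div_mul_eq_mul_div]
    have h2 : (q.2 - u.2) * (v.1 - u.1) < (v.2 - u.2) * (q.1 - u.1) := by nlinarith
    have h3 := (lt_div_iff₀ hd).mpr h2
    linarith

lemma belowLine_swap (u v q : ℝ × ℝ) (h : u.1 ≠ v.1) :
    BelowLine u v q ↔ BelowLine v u q := by
  unfold BelowLine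
  have h1 : v.1 - u.1 ≠ 0 := sub_ne_zero.mpr (Ne.symm h)
  have h2 : u.1 - v.1 ≠ 0 := sub_ne_zero.mpr h
  have hkey : u.2 + (v.2 - u.2) / (v.1 - u.1) * (q.1 - u.1)
      = v.2 + (u.2 - v.2) / (u.1 - v.1) * (q.1 - v.1) := by
    field_simp
    ring
  rw [hkey]

lemma mem_of_everyOther : ∀ (l : List (ℝ × ℝ)) (p : ℝ × ℝ), p ∈ everyOther l → p ∈ l
  | [], p, h => by simp [everyOther] at h
  | [a], p, h => by simpa [everyOther] using h
  | a :: b :: l, p, h => by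
    simp only [everyOther, List.mem_cons] at h ⊢
    rcases h with h | h
    · exact Or.inl h
    · exact Or.inr (Or.inr (mem_of_everyOther l p h))

lemma everyOther_head (x : ℝ × ℝ) (xs : List (ℝ × ℝ)) : x ∈ everyOther (x :: xs) := by
  cases xs <;> simp [everyOther]

lemma mem_everyOther_cover : ∀ (l : List (ℝ × ℝ)) (p : ℝ × ℝ), p ∈ l →
    p ∈ everyOther l ∨ p ∈ everyOther l.tail
  | [], p, h => by simp at h
  | [a], p, h => by left; simpa [everyOther] using h
  | a :: b :: l, p, h => by
    simp only [List.mem_cons] at h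
    rcases h with rfl | rfl | h
    · left; simp [everyOther]
    · right; exact everyOther_head p l
    · rcases mem_everyOther_cover l p h with h1 | h1
      · left
        simp only [everyOther, List.mem_cons]
        exact Or.inr h1
      · right
        show p ∈ everyOther (b :: l)
        cases l with
        | nil => simp [everyOther] at h1
        | cons z l' =>
          simp only [everyOther, List.mem_cons] at h1 ⊢
          exact Or.inr h1

lemma sortedX_ne_x (l : List (ℝ × ℝ)) (hs : SortedX l) {p q : ℝ × ℝ}
    (hp : p ∈ l) (hq : q ∈ l) (hne : p ≠ q) : p.1 ≠ q.1 := by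
  have h2 : l.Pairwise (fun x y : ℝ × ℝ => x.1 ≠ y.1 ∧ y.1 ≠ x.1) :=
    hs.imp (fun h => ⟨ne_of_lt h, ne_of_gt h⟩)
  have hsym : Symmetric (fun x y : ℝ × ℝ => x.1 ≠ y.1 ∧ y.1 ≠ x.1) :=
    fun x y h => ⟨h.2, h.1⟩
  haveI : Std.Symm (fun x y : ℝ × ℝ => x.1 ≠ y.1 ∧ y.1 ≠ x.1) := ⟨fun x y h => hsym h⟩
  exact (List.Pairwise.forall h2 hp hq hne).1

lemma key2 (u v : ℝ × ℝ) (huv : u.1 ≠ v.1 ∨ u.2 ≠ v.2) (r : ℝ) (a b c p : ℝ × ℝ)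
    (ha : orient3 u v a ≤ r) (hb : orient3 u v b ≤ r) (hc : orient3 u v c ≤ r)
    (hp : p ∈ interior (convexHull ℝ ({a, b, c} : Set (ℝ × ℝ)))) :
    orient3 u v p < r := by
  set c1 : ℝ := -(v.2 - u.2) with hc1
  set c2 : ℝ := v.1 - u.1 with hc2
  have horient : ∀ q : ℝ × ℝ,
      orient3 u v q = c1 * q.1 + c2 * q.2 + (u.1 * (v.2 - u.2) - u.2 * (v.1 - u.1)) := by
    intro q; unfold orient3; rw [hc1, hc2]; ring
  have hconv : Convex ℝ {q : ℝ × ℝ | orient3 u v q ≤ r} := by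
    intro x hx y hy s t hs ht hst
    simp only [Set.mem_setOf_eq] at hx hy ⊢
    have hxy : orient3 u v (s • x + t • y) = s * orient3 u v x + t * orient3 u v y := by
      simp only [horient, Prod.fst_add, Prod.snd_add, Prod.smul_fst, Prod.smul_snd,
        smul_eq_mul]
      have hs1 : s = 1 - t := by linarith
      subst hs1; ring
    rw [hxy]
    have hr : s * r + t * r = r := by rw [← add_mul, hst, one_mul]
    nlinarith [mul_le_mul_of_nonneg_left hx hs, mul_le_mul_of_nonneg_left hy ht]
  have hhull : convexHull ℝ ({a, b, c} : Set (ℝ × ℝ)) ⊆ {q | orient3 u v q ≤ r} := by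
    apply convexHull_min _ hconv
    intro x hx
    simp only [Set.mem_insert_iff, Set.mem_singleton_iff] at hx
    rcases hx with rfl | rfl | rfl <;> assumption
  have hle : orient3 u v p ≤ r := hhull (interior_subset hp)
  rcases lt_or_eq_of_le hle with h | h
  · exact h
  · exfalso
    rcases Metric.isOpen_iff.mp isOpen_interior p hp with ⟨ε, hε, hball⟩
    have hne : c1 ≠ 0 ∨ c2 ≠ 0 := by
      rcases huv with h1 | h1
      · exact Or.inr (sub_ne_zero.mpr (Ne.symm h1))
      · exact Or.inl (neg_ne_zero.mpr (sub_ne_zero.mpr (Ne.symm h1)))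
    have hcc : 0 < |c1| + |c2| := by
      rcases hne with h1 | h1
      · linarith [abs_pos.mpr h1, abs_nonneg c2]
      · linarith [abs_pos.mpr h1, abs_nonneg c1]
    have hcsq : 0 < c1 ^ 2 + c2 ^ 2 := by
      rcases hne with h1 | h1
      · have := pow_pos (abs_pos.mpr h1) 2
        nlinarith [sq_nonneg c2, sq_abs c1]
      · have := pow_pos (abs_pos.mpr h1) 2
        nlinarith [sq_nonneg c1, sq_abs c2]
    set δ : ℝ := ε / (2 * (|c1| + |c2|)) with hδ
    have hδpos : 0 < δ := by positivity
    set q : ℝ × ℝ := (p.1 + δ * c1, p.2 + δ * c2) with hqdef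
    have hds : δ * (|c1| + |c2|) = ε / 2 := by
      rw [hδ]; field_simp
    have hdist : dist q p < ε := by
      rw [Prod.dist_eq]
      have e1 : q.1 - p.1 = δ * c1 := by simp [hqdef]
      have e2 : q.2 - p.2 = δ * c2 := by simp [hqdef]
      have d1 : dist q.1 p.1 = δ * |c1| := by
        rw [Real.dist_eq, e1, abs_mul, abs_of_pos hδpos]
      have d2 : dist q.2 p.2 = δ * |c2| := by
        rw [Real.dist_eq, e2, abs_mul, abs_of_pos hδpos]
      rw [d1, d2]
      apply max_lt <;> nlinarith [abs_nonneg c1, abs_nonneg c2]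
    have hqS : orient3 u v q ≤ r := hhull (interior_subset (hball hdist))
    have heq : orient3 u v q = orient3 u v p + δ * (c1 ^ 2 + c2 ^ 2) := by
      rw [horient q, horient p, hqdef]; ring
    nlinarith [mul_pos hδpos hcsq]

/-- If `a <ₓ b` are points of the odd part `H⁻ = everyOther l` of a Horton set `l`
with exactly one point of `H⁻` strictly between them in x-coordinate, then for any
point `c` of the even part `H⁺ = everyOther l.tail`, the triangle `a b c` contains at
most 1 point of `l` in its interior. -/
theorem horton_skip_one_almost_empty (l : List (ℝ × ℝ)) (hH : IsHorton l)
    (a b c : ℝ × ℝ)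
    (ha : a ∈ everyOther l) (hb : b ∈ everyOther l) (hab : a.1 < b.1)
    (hone : ((everyOther l).toFinset.filter (fun p => a.1 < p.1 ∧ p.1 < b.1)).card = 1)
    (hc : c ∈ everyOther l.tail) :
    triPts l.toFinset a b c ≤ 1 := by
  cases hH with
  | small _ hlen hsort =>
    exfalso
    rcases l with _ | ⟨x, _ | ⟨y, t⟩⟩
    · simp [everyOther] at ha
    · simp only [everyOther, List.mem_singleton] at ha hb
      rw [ha, hb] at hab; exact lt_irrefl _ hab
    · rcases t with _ | ⟨z, t'⟩
      · simp only [everyOther, List.mem_singleton] at ha hb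
        rw [ha, hb] at hab; exact lt_irrefl _ hab
      · simp at hlen
  | step _ hsort hlen hHm hHp hBelow hAbove =>
    have habne : a ≠ b := fun h => lt_irrefl _ (h ▸ hab)
    have hal : a ∈ l := mem_of_everyOther l a ha
    have hbl : b ∈ l := mem_of_everyOther l b hb
    have hcl : c ∈ l := by
      cases l with
      | nil => simp [everyOther] at hc
      | cons x xs => exact List.mem_cons_of_mem x (mem_of_everyOther xs c hc)
    have habove : AboveLine a b c := hAbove a ha b hb habne c hc
    have horc : 0 < orient3 a b c := (aboveLine_iff a b c hab).mp habove
    have hca : c ≠ a := by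
      intro h; rw [h, orient3_self1] at horc; exact lt_irrefl 0 horc
    have hcb : c ≠ b := by
      intro h; rw [h, orient3_self2] at horc; exact lt_irrefl 0 horc
    have hcax : a.1 ≠ c.1 := sortedX_ne_x l hsort hal hcl (Ne.symm hca)
    have hcbx : b.1 ≠ c.1 := sortedX_ne_x l hsort hbl hcl (Ne.symm hcb)
    have hbca : orient3 b c a = orient3 a b c := orient3_cyc b c a
    have hcab : orient3 c a b = orient3 a b c := by
      rw [orient3_cyc c a b, hbca]
    unfold triPts
    rw [← hone]
    apply Finset.card_le_card
    intro p hp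
    simp only [Finset.mem_filter, List.mem_toFinset] at hp ⊢
    obtain ⟨hpl, hpI⟩ := hp
    -- p is not a vertex
    have hpa : p ≠ a := by
      intro h
      have hk := key2 b c (Or.inl hcbx) (orient3 b c a) a b c p le_rfl
        (by rw [orient3_self1, hbca]; exact le_of_lt horc)
        (by rw [orient3_self2, hbca]; exact le_of_lt horc)
        hpI
      rw [h] at hk; exact lt_irrefl _ hk
    have hpb : p ≠ b := by
      intro h
      have hk := key2 c a (Or.inl (Ne.symm hcax)) (orient3 c a b) a b c p
        (by rw [orient3_self2, hcab]; exact le_of_lt horc)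
        le_rfl
        (by rw [orient3_self1, hcab]; exact le_of_lt horc)
        hpI
      rw [h] at hk; exact lt_irrefl _ hk
    have hpc : p ≠ c := by
      intro h
      have hk := key2 a b (Or.inl (ne_of_lt hab)) (orient3 a b c) a b c p
        (by rw [orient3_self1]; exact le_of_lt horc)
        (by rw [orient3_self2]; exact le_of_lt horc)
        le_rfl
        hpI
      rw [h] at hk; exact lt_irrefl _ hk
    have hpax : p.1 ≠ a.1 := sortedX_ne_x l hsort hpl hal hpa
    have hpbx : p.1 ≠ b.1 := sortedX_ne_x l hsort hpl hbl hpb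
    have hpcx : p.1 ≠ c.1 := sortedX_ne_x l hsort hpl hcl hpc
    rcases mem_everyOther_cover l p hpl with hpm | hpp
    · -- p in the odd part H⁻
      refine ⟨hpm, ?_, ?_⟩
      · -- a.1 < p.1
        rcases lt_trichotomy p.1 a.1 with h1 | h1 | h1
        · exfalso
          have hup : AboveLine p a c := hAbove p hpm a ha hpa c hc
          have h2 : 0 < orient3 p a c := (aboveLine_iff p a c h1).mp hup
          have e1 : orient3 a c b = -orient3 a b c := by unfold orient3; ring
          have hk := key2 a c (Or.inl hcax) 0 a b c p
            (le_of_eq (orient3_self1 a c))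
            (by rw [e1]; linarith)
            (le_of_eq (orient3_self2 a c))
            hpI
          rw [orient3_cyc a c p] at hk
          linarith
        · exact absurd h1 hpax
        · exact h1
      · -- p.1 < b.1
        rcases lt_trichotomy p.1 b.1 with h2 | h2 | h2
        · exact h2
        · exact absurd h2 hpbx
        · exfalso
          have hup : AboveLine b p c := hAbove b hb p hpm (Ne.symm hpb) c hc
          have h3 : 0 < orient3 b p c := (aboveLine_iff b p c h2).mp hup
          have e1 : orient3 c b a = -orient3 a b c := by unfold orient3; ring
          have e2 : orient3 c b p = orient3 b p c := by unfold orient3; ring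
          have hk := key2 c b (Or.inl (Ne.symm hcbx)) 0 a b c p
            (by rw [e1]; linarith)
            (le_of_eq (orient3_self2 c b))
            (le_of_eq (orient3_self1 c b))
            hpI
          rw [e2] at hk
          linarith
    · -- p in the even part H⁺ : impossible
      exfalso
      have hba : BelowLine p c a := hBelow p hpp c hc hpc a ha
      have hbb : BelowLine p c b := hBelow p hpp c hc hpc b hb
      rcases lt_trichotomy p.1 c.1 with h1 | h1 | h1
      · have h2 : orient3 p c a < 0 := (belowLine_iff p c a h1).mp hba
        have h3 : orient3 p c b < 0 := (belowLine_iff p c b h1).mp hbb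
        have hk := key2 p c (Or.inl (ne_of_lt h1)) 0 a b c p
          (le_of_lt h2) (le_of_lt h3) (le_of_eq (orient3_self2 p c)) hpI
        rw [orient3_self1] at hk
        exact lt_irrefl 0 hk
      · exact hpcx h1
      · have hba' : BelowLine c p a := (belowLine_swap p c a hpcx).mp hba
        have hbb' : BelowLine c p b := (belowLine_swap p c b hpcx).mp hbb
        have h2 : orient3 c p a < 0 := (belowLine_iff c p a h1).mp hba'
        have h3 : orient3 c p b < 0 := (belowLine_iff c p b h1).mp hbb'
        have hk := key2 c p (Or.inl (ne_of_lt h1)) 0 a b c p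
          (le_of_lt h2) (le_of_lt h3) (le_of_eq (orient3_self1 c p)) hpI
        rw [orient3_self2] at hk
        exact lt_irrefl 0 hk
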